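/- Let R be a commutative noetherian local domain of Krull dimension 1. Then a subcategory 𝒞 of the category of finitely generated R-modules is IE-closed (equivalently, a torsion-free class) if and only if 𝒞 is one of the following four subcategories: the zero subcategory; the subcategory of finitely generated R-modules of finite length; the subcategory of torsion-free finitely generated R-modules (modules M such that rx = 0 with r ∈ R, r ≠ 0, x ∈ M implies x = 0); or all of mod R. -/

import Mathlib

set_option linter.unusedSectionVars false
set_option maxHeartbeats 1000000


universe u

section Defs

variable (A : Type u) [Ring A]

/-- `C` is a subcategory of `mod A`: it is closed under isomorphisms, contains the zero
modules, and consists of finitely generated modules. -/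
def IsModSubcat (C : Set (ModuleCat.{u} A)) : Prop :=
  (∀ M N : ModuleCat.{u} A, (M ≃ₗ[A] N) → M ∈ C → N ∈ C) ∧
  (∀ M : ModuleCat.{u} A, Subsingleton M → M ∈ C) ∧
  (∀ M ∈ C, Module.Finite A M)

/-- `C` is closed under submodules. -/
def SubmoduleClosed (C : Set (ModuleCat.{u} A)) : Prop :=
  ∀ M ∈ C, ∀ N : Submodule A M, ModuleCat.of A N ∈ C

/-- `C` is closed under quotient modules. -/
def QuotClosed (C : Set (ModuleCat.{u} A)) : Prop :=
  ∀ M ∈ C, ∀ N : Submodule A M, ModuleCat.of A (M ⧸ N) ∈ C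

/-- `C` is closed under images: for every `A`-linear map `f : C₁ → C₂` with `C₁, C₂ ∈ C`,
the image of `f` belongs to `C`. -/
def ImagesClosed (C : Set (ModuleCat.{u} A)) : Prop :=
  ∀ M₁ ∈ C, ∀ M₂ ∈ C, ∀ f : M₁ →ₗ[A] M₂, ModuleCat.of A (LinearMap.range f) ∈ C

/-- `C` is closed under kernels: for every `A`-linear map `f : C₁ → C₂` with `C₁, C₂ ∈ C`,
the kernel of `f` belongs to `C`. -/
def KernelsClosed (C : Set (ModuleCat.{u} A)) : Prop :=
  ∀ M₁ ∈ C, ∀ M₂ ∈ C, ∀ f : M₁ →ₗ[A] M₂, ModuleCat.of A (LinearMap.ker f) ∈ C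

/-- `C` is closed under extensions: for every short exact sequence
`0 → L → M → N → 0` of finitely generated modules with `L, N ∈ C`, we have `M ∈ C`. -/
def ExtClosed (C : Set (ModuleCat.{u} A)) : Prop :=
  ∀ (L M N : ModuleCat.{u} A), Module.Finite A M →
    ∀ (f : L →ₗ[A] M) (g : M →ₗ[A] N),
      Function.Injective f → Function.Surjective g →
      LinearMap.range f = LinearMap.ker g →
      L ∈ C → N ∈ C → M ∈ C

end Defs


open IsLocalRing

section Helpers

variable {R : Type u} [CommRing R] [IsNoetherianRing R] [IsLocalRing R] [IsDomain R]

omit [IsNoetherianRing R] in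
/-- In a 1-dimensional local domain, every nonzero prime is the maximal ideal. -/
lemma prime_eq_max (hdim : ringKrullDim R = 1) {P : Ideal R} (hP : P.IsPrime)
    (hne : P ≠ ⊥) : P = maximalIdeal R := by
  have hle : P ≤ maximalIdeal R := le_maximalIdeal hP.ne_top
  by_contra hne2
  have hlt : P < maximalIdeal R := lt_of_le_of_ne hle hne2
  have hbot : (⊥ : Ideal R) < P := bot_lt_iff_ne_bot.mpr hne
  let x0 : PrimeSpectrum R := ⟨⊥, Ideal.bot_prime⟩
  let x1 : PrimeSpectrum R := ⟨P, hP⟩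
  let x2 : PrimeSpectrum R := ⟨maximalIdeal R, (maximalIdeal.isMaximal R).isPrime⟩
  let p : LTSeries (PrimeSpectrum R) :=
    ⟨2, ![x0, x1, x2], by
      intro i
      fin_cases i
      · exact hbot
      · exact hlt⟩
  have h2 : (p.length : WithBot (WithTop ℕ)) ≤ ringKrullDim R :=
    Order.LTSeries.length_le_krullDim p
  rw [hdim] at h2
  have : p.length = 2 := rfl
  rw [this] at h2
  norm_num at h2
  change ((2 : ℕ) : WithBot ℕ∞) ≤ ((1:ℕ) : WithBot ℕ∞) at h2
  exact absurd h2 (by exact_mod_cast (by norm_num : ¬ (2:ℕ) ≤ 1))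

lemma pow_max_le (hdim : ringKrullDim R = 1) {I : Ideal R} (hI : I ≠ ⊥) :
    ∃ k : ℕ, (maximalIdeal R) ^ k ≤ I := by
  have hrad : maximalIdeal R ≤ I.radical := by
    rw [Ideal.radical_eq_sInf]
    refine le_sInf ?_
    rintro J ⟨hIJ, hJ⟩
    have hJne : J ≠ ⊥ := by
      rintro rfl
      exact hI (le_bot_iff.mp hIJ)
    exact (prime_eq_max hdim hJ hJne).ge
  obtain ⟨n, hn⟩ := Ideal.exists_radical_pow_le_of_fg I (IsNoetherian.noetherian _)
  exact ⟨n, le_trans (Ideal.pow_right_mono hrad n) hn⟩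

end Helpers

section Helpers2

variable {R : Type u} [CommRing R] [IsNoetherianRing R] [IsLocalRing R] [IsDomain R]

lemma fl_sup {M : Type u} [AddCommGroup M] [Module R M] (N₁ N₂ : Submodule R M)
    (h₁ : IsFiniteLength R N₁) (h₂ : IsFiniteLength R N₂) :
    IsFiniteLength R ↥(N₁ ⊔ N₂) := by
  rw [isFiniteLength_iff_isNoetherian_isArtinian] at h₁ h₂
  obtain ⟨hn₁, ha₁⟩ := h₁
  obtain ⟨hn₂, ha₂⟩ := h₂
  let f : (N₁ × N₂) →ₗ[R] M := N₁.subtype.coprod N₂.subtype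
  have hr : LinearMap.range f = N₁ ⊔ N₂ := by
    rw [LinearMap.range_coprod, Submodule.range_subtype, Submodule.range_subtype]
  have : IsFiniteLength R ↥(LinearMap.range f) :=
    isFiniteLength_iff_isNoetherian_isArtinian.mpr ⟨inferInstance, inferInstance⟩
  exact (LinearEquiv.ofEq _ _ hr).isFiniteLength this

lemma fl_ext {M : Type u} [AddCommGroup M] [Module R M] (N : Submodule R M)
    (h1 : IsFiniteLength R N) (h2 : IsFiniteLength R (M ⧸ N)) : IsFiniteLength R M := by
  rw [isFiniteLength_iff_isNoetherian_isArtinian] at h1 h2 ⊢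
  exact ⟨(isNoetherian_iff_submodule_quotient N).mpr ⟨h1.1, h2.1⟩,
    (isArtinian_iff_submodule_quotient N).mpr ⟨h1.2, h2.2⟩⟩

/-- A f.g. module killed by the maximal ideal has finite length. -/
lemma fl_of_max_smul_zero (M : Type u) [AddCommGroup M] [Module R M] [Module.Finite R M]
    (h : ∀ r ∈ maximalIdeal R, ∀ x : M, r • x = 0) : IsFiniteLength R M := by
  have key : ∀ N : Submodule R M, IsFiniteLength R N := by
    intro N
    refine Submodule.fg_induction (motive := fun N _ => IsFiniteLength R N) ?_ (fun N₁ N₂ _ _ => fl_sup N₁ N₂)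
      N (IsNoetherian.noetherian N)
    intro x
    by_cases hx : x = 0
    · subst hx
      rw [Submodule.span_zero_singleton]
      exact .of_subsingleton
    · have htor : Ideal.torsionOf R M x = maximalIdeal R := by
        refine le_antisymm (le_maximalIdeal ?_) ?_
        · rw [Ne, Ideal.torsionOf_eq_top_iff]; exact hx
        · intro r hr
          rw [Ideal.mem_torsionOf_iff]
          exact h r hr x
      have hsimp : IsSimpleModule R (R ⧸ Ideal.torsionOf R M x) := by
        rw [htor, isSimpleModule_iff_isCoatom]
        exact (Ideal.isMaximal_def).mp (maximalIdeal.isMaximal R)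
      have : IsFiniteLength R (R ⧸ Ideal.torsionOf R M x) := by
        have h0 : IsSimpleModule R ((R ⧸ Ideal.torsionOf R M x) ⧸ (⊥ :
            Submodule R (R ⧸ Ideal.torsionOf R M x))) :=
          IsSimpleModule.congr (Submodule.quotEquivOfEqBot _ rfl)
        exact .of_simple_quotient (N := ⊥) .of_subsingleton
      exact (Ideal.quotTorsionOfEquivSpanSingleton R M x).isFiniteLength this
  exact Submodule.topEquiv.isFiniteLength (key ⊤)

/-- `R ⧸ I` has finite length for any nonzero ideal `I`. -/
lemma fl_quot (hdim : ringKrullDim R = 1) (I : Ideal R) (hI : I ≠ ⊥) :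
    IsFiniteLength R (R ⧸ I) := by
  obtain ⟨k, hk⟩ := pow_max_le hdim hI
  clear hI
  induction k generalizing I with
  | zero =>
    rw [pow_zero, Ideal.one_eq_top, top_le_iff] at hk
    have : Subsingleton (R ⧸ I) := Submodule.Quotient.subsingleton_iff.mpr hk
    exact .of_subsingleton
  | succ k ih =>
    set J : Ideal R := maximalIdeal R ^ k ⊔ I with hJ
    have hIJ : I ≤ J := le_sup_right
    have hJfl : IsFiniteLength R (R ⧸ J) := ih J le_sup_left
    set N : Submodule R (R ⧸ I) := Submodule.map I.mkQ J with hN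
    have hNfl : IsFiniteLength R N := by
      refine fl_of_max_smul_zero _ ?_
      · rintro r hr ⟨x, hxN⟩
        obtain ⟨j, hj, rfl⟩ := Submodule.mem_map.mp hxN
        refine Subtype.ext ?_
        show r • I.mkQ j = 0
        rw [← map_smul, Submodule.mkQ_apply, Submodule.Quotient.mk_eq_zero]
        obtain ⟨a, ha, b, hb, rfl⟩ := Submodule.mem_sup.mp hj
        have h1 : r • a ∈ I := by
          refine hk ?_
          have : r * a ∈ maximalIdeal R * maximalIdeal R ^ k := Ideal.mul_mem_mul hr ha
          rw [← pow_succ'] at this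
          exact this
        have h2 : r • b ∈ I := I.smul_mem r hb
        rw [smul_add]
        exact I.add_mem h1 h2
    refine fl_ext N hNfl ?_
    exact (Submodule.quotientQuotientEquivQuotient I J hIJ).symm.isFiniteLength hJfl

/-- A f.g. torsion module has finite length. -/
lemma fl_of_torsion (hdim : ringKrullDim R = 1) (M : Type u) [AddCommGroup M] [Module R M]
    [Module.Finite R M] (htor : ∀ x : M, ∃ r : R, r ≠ 0 ∧ r • x = 0) :
    IsFiniteLength R M := by
  have key : ∀ N : Submodule R M, IsFiniteLength R N := by
    intro N
    refine Submodule.fg_induction (motive := fun N _ => IsFiniteLength R N) ?_ (fun N₁ N₂ _ _ => fl_sup N₁ N₂)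
      N (IsNoetherian.noetherian N)
    intro x
    obtain ⟨r, hr, hrx⟩ := htor x
    have hne : Ideal.torsionOf R M x ≠ ⊥ := by
      intro hbot
      have : r ∈ Ideal.torsionOf R M x := (Ideal.mem_torsionOf_iff x r).mpr hrx
      rw [hbot] at this
      exact hr this
    exact (Ideal.quotTorsionOfEquivSpanSingleton R M x).isFiniteLength (fl_quot hdim _ hne)
  exact Submodule.topEquiv.isFiniteLength (key ⊤)

end Helpers2

section Helpers3

variable {R : Type u} [CommRing R] [IsNoetherianRing R] [IsLocalRing R] [IsDomain R]

omit [IsNoetherianRing R] [IsDomain R] in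
/-- Any two simple modules over a local ring are isomorphic. -/
lemma simple_equiv (Q₁ Q₂ : Type u) [AddCommGroup Q₁] [Module R Q₁] [AddCommGroup Q₂]
    [Module R Q₂] [IsSimpleModule R Q₁] [IsSimpleModule R Q₂] :
    Nonempty (Q₁ ≃ₗ[R] Q₂) := by
  obtain ⟨I₁, hI₁, ⟨e₁⟩⟩ := isSimpleModule_iff_quot_maximal.mp ‹IsSimpleModule R Q₁›
  obtain ⟨I₂, hI₂, ⟨e₂⟩⟩ := isSimpleModule_iff_quot_maximal.mp ‹IsSimpleModule R Q₂›
  rw [IsLocalRing.eq_maximalIdeal hI₁] at e₁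
  rw [IsLocalRing.eq_maximalIdeal hI₂] at e₂
  exact ⟨e₁.trans e₂.symm⟩

omit [IsNoetherianRing R] [IsDomain R] in
/-- Every nonzero f.g. module over a local ring surjects onto any simple module. -/
lemma exists_surj_to_simple (B : Type u) [AddCommGroup B] [Module R B] [Module.Finite R B]
    [Nontrivial B] (Q : Type u) [AddCommGroup Q] [Module R Q] [IsSimpleModule R Q] :
    ∃ φ : B →ₗ[R] Q, Function.Surjective φ := by
  have hcompact : IsCompactElement (⊤ : Submodule R B) :=
    (Submodule.fg_iff_compact _).mp (Module.finite_def.mp ‹_›)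
  have hco : IsCoatomic (Submodule R B) := CompleteLattice.coatomic_of_top_compact hcompact
  rcases hco.eq_top_or_exists_le_coatom (⊥ : Submodule R B) with h | ⟨N, hN, -⟩
  · exact absurd h bot_ne_top
  · have hsimp : IsSimpleModule R (B ⧸ N) := isSimpleModule_iff_isCoatom.mpr hN
    obtain ⟨e⟩ := simple_equiv (R := R) (B ⧸ N) Q
    exact ⟨e.toLinearMap.comp N.mkQ, e.surjective.comp (Submodule.mkQ_surjective N)⟩

end Helpers3

section Embed

variable {R : Type u} [CommRing R] [IsNoetherianRing R] [IsLocalRing R] [IsDomain R]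

omit [IsNoetherianRing R] [IsLocalRing R] in
/-- A f.g. torsion-free module over a domain embeds into a finite free module. -/
lemma embeds_free (N : Type u) [AddCommGroup N] [Module R N] [Module.Finite R N]
    [NoZeroSMulDivisors R N] :
    ∃ (n : ℕ) (f : N →ₗ[R] (Fin n → R)), Function.Injective f := by
  classical
  obtain ⟨n, s, hs⟩ := Module.Finite.exists_fin (R := R) (M := N)
  obtain ⟨I, hli, hmax⟩ := exists_maximal_linearIndepOn R s
  haveI : Fintype I := (Set.toFinite I).fintype
  set S : Submodule R N := Submodule.span R (Set.range fun x : I => s ↑x) with hS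
  have hSI : Submodule.span R (s '' I) = S := by rw [Set.image_eq_range]
  -- a choice of scalars
  have hchoice : ∀ i : Fin n, ∃ a : R, a ≠ 0 ∧ a • s i ∈ S := by
    intro i
    by_cases hi : i ∈ I
    · exact ⟨1, one_ne_zero, by
        rw [one_smul]
        exact Submodule.subset_span ⟨⟨i, hi⟩, rfl⟩⟩
    · obtain ⟨a, ha, haS⟩ := hmax i hi
      exact ⟨a, ha, hSI ▸ haS⟩
  choose a ha haS using hchoice
  set d : R := ∏ i : Fin n, a i with hd
  have hdne : d ≠ 0 := Finset.prod_ne_zero_iff.mpr fun i _ => ha i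
  have hdS : ∀ y : N, d • y ∈ S := by
    intro y
    have hy : y ∈ Submodule.span R (Set.range s) := hs ▸ Submodule.mem_top
    induction hy using Submodule.span_induction with
    | mem x hx =>
      obtain ⟨i, rfl⟩ := hx
      have : d = (∏ j ∈ Finset.univ.erase i, a j) * a i := by
        rw [hd, ← Finset.prod_erase_mul Finset.univ a (Finset.mem_univ i)]
      rw [this, mul_smul]
      exact S.smul_mem _ (haS i)
    | zero => rw [smul_zero]; exact S.zero_mem
    | add x y _ _ hx hy => rw [smul_add]; exact S.add_mem hx hy
    | smul r x _ hx => rw [smul_comm]; exact S.smul_mem r hx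
  let φ : N →ₗ[R] S := LinearMap.codRestrict S (d • LinearMap.id) hdS
  have hφ : Function.Injective φ := by
    intro x y hxy
    have : d • x = d • y := congrArg Subtype.val hxy
    rcases smul_right_injective N hdne this with h
    exact h
  let b : Module.Basis I R S := Module.Basis.span hli
  let e1 : S ≃ₗ[R] (I → R) := b.equivFun
  let e2 : (I → R) ≃ₗ[R] (Fin (Fintype.card I) → R) :=
    LinearEquiv.funCongrLeft R R (Fintype.equivFin I).symm
  exact ⟨Fintype.card I, (e2.toLinearMap.comp (e1.toLinearMap.comp φ)),
    e2.injective.comp (e1.injective.comp hφ)⟩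

end Embed

section CatHelpers

variable {R : Type u} [CommRing R] [IsNoetherianRing R] [IsLocalRing R] [IsDomain R]
variable {C : Set (ModuleCat.{u} R)}

lemma mem_of_lequiv (hC : IsModSubcat R C) {M : ModuleCat.{u} R}
    {X : Type u} [AddCommGroup X] [Module R X] (e : M ≃ₗ[R] X) (hM : M ∈ C) :
    ModuleCat.of R X ∈ C :=
  hC.1 M (ModuleCat.of R X) e hM

/-- The key pullback lemma: if `T ≤ X ≤ W` with `W ∈ C`, `T ∈ C`, and `X/T` is a quotient
of some `B ∈ C`, then `X ∈ C`. -/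
lemma catL1 (hC : IsModSubcat R C) (himg : ImagesClosed R C) (hext : ExtClosed R C)
    {W B : ModuleCat.{u} R} (hW : W ∈ C) (hB : B ∈ C)
    {T X : Submodule R W} (hTX : T ≤ X) (hT : ModuleCat.of R T ∈ C)
    (φ : B →ₗ[R] (↥X ⧸ (Submodule.comap X.subtype T)))
    (hφ : Function.Surjective φ) : ModuleCat.of R X ∈ C := by
  classical
  let T' : Submodule R ↥X := Submodule.comap X.subtype T
  haveI : Module.Finite R W := hC.2.2 W hW
  haveI : Module.Finite R B := hC.2.2 B hB
  haveI : IsNoetherian R W := inferInstance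
  haveI : IsNoetherian R B := inferInstance
  let π : (↥X × ↥B) →ₗ[R] (↥X ⧸ T') := T'.mkQ.comp (LinearMap.fst R ↥X ↥B)
  let ψB : (↥X × ↥B) →ₗ[R] (↥X ⧸ T') := φ.comp (LinearMap.snd R ↥X ↥B)
  set E : Submodule R (↥X × ↥B) := LinearMap.ker (π - ψB) with hE
  have hmemE : ∀ (p : ↥X × ↥B), (p ∈ E ↔ T'.mkQ p.1 = φ p.2) := by
    intro p
    simp only [hE, LinearMap.mem_ker, LinearMap.sub_apply, sub_eq_zero]
    rfl
  -- the map T → E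
  have hfin : ∀ t : ↥T, (((Submodule.inclusion hTX).prod 0) t ∈ E) := by
    intro t
    rw [hmemE]
    show T'.mkQ (Submodule.inclusion hTX t) = φ 0
    rw [map_zero]
    rw [Submodule.mkQ_apply, Submodule.Quotient.mk_eq_zero]
    exact t.2
  let f : ↥T →ₗ[R] ↥E := LinearMap.codRestrict E ((Submodule.inclusion hTX).prod 0) hfin
  have hfinj : Function.Injective f := by
    intro t₁ t₂ h
    have h1 : Submodule.inclusion hTX t₁ = Submodule.inclusion hTX t₂ :=
      congrArg Prod.fst (congrArg Subtype.val h)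
    exact Submodule.inclusion_injective hTX h1
  let g : ↥E →ₗ[R] ↥B := (LinearMap.snd R ↥X ↥B).comp E.subtype
  have hgsurj : Function.Surjective g := by
    intro b
    obtain ⟨x, hx⟩ := T'.mkQ_surjective (φ b)
    exact ⟨⟨(x, b), (hmemE (x, b)).mpr (by exact hx)⟩, rfl⟩
  have hrange : LinearMap.range f = LinearMap.ker g := by
    ext ⟨⟨x, b⟩, he⟩
    simp only [LinearMap.mem_range, LinearMap.mem_ker]
    constructor
    · rintro ⟨t, ht⟩
      have := congrArg Subtype.val ht
      have hb : b = 0 := by simpa [f] using (congrArg Prod.snd this).symm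
      show g ⟨(x, b), he⟩ = 0
      simpa [g] using hb
    · intro hgz
      have hb : b = 0 := hgz
      have hmk : T'.mkQ x = 0 := by
        have := (hmemE (x, b)).mp he
        rw [hb, map_zero] at this
        exact this
      have hxT' : x ∈ T' := by rwa [Submodule.mkQ_apply, Submodule.Quotient.mk_eq_zero] at hmk
      refine ⟨⟨(x : W), hxT'⟩, ?_⟩
      apply Subtype.ext
      apply Prod.ext
      · exact Subtype.ext rfl
      · exact hb.symm
  haveI : Module.Finite R ↥E := Module.Finite.iff_fg.mpr (IsNoetherian.noetherian E)
  have hE_mem : ModuleCat.of R ↥E ∈ C :=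
    hext (ModuleCat.of R ↥T) (ModuleCat.of R ↥E) B ‹Module.Finite R ↥E›
      f g hfinj hgsurj hrange hT hB
  -- now take the image in W
  let ψ : ModuleCat.of R ↥E →ₗ[R] W := X.subtype.comp ((LinearMap.fst R ↥X ↥B).comp E.subtype)
  have hψr : LinearMap.range ψ = X := by
    have hsurj : Function.Surjective ((LinearMap.fst R ↥X ↥B).comp E.subtype) := by
      intro x
      obtain ⟨b, hb⟩ := hφ (T'.mkQ x)
      exact ⟨⟨(x, b), (hmemE (x, b)).mpr (by exact hb.symm)⟩, rfl⟩
    have : LinearMap.range ((LinearMap.fst R ↥X ↥B).comp E.subtype) = ⊤ :=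
      LinearMap.range_eq_top.mpr hsurj
    rw [LinearMap.range_comp, this, Submodule.map_top, Submodule.range_subtype]
  have := himg (ModuleCat.of R ↥E) hE_mem W hW ψ
  exact hC.1 _ _ (LinearEquiv.ofEq _ _ hψr) this

end CatHelpers

section Climb

variable {R : Type u} [CommRing R] [IsNoetherianRing R] [IsLocalRing R] [IsDomain R]
variable {C : Set (ModuleCat.{u} R)}

/-- Climbing lemma: if `T₀ ≤ X ≤ W` with `W ∈ C`, `T₀ ∈ C`, and `a • X ⊆ T₀` for some
`a ≠ 0`, and there is a nontrivial `B ∈ C`, then `X ∈ C`. -/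
lemma catClimb (hdim : ringKrullDim R = 1)
    (hC : IsModSubcat R C) (himg : ImagesClosed R C) (hext : ExtClosed R C)
    {W B : ModuleCat.{u} R} (hW : W ∈ C) (hB : B ∈ C) (hBnt : Nontrivial B)
    {a : R} (ha : a ≠ 0) (X : Submodule R W) (T₀ : Submodule R W) (hT₀X : T₀ ≤ X)
    (hT₀ : ModuleCat.of R T₀ ∈ C) (htor₀ : ∀ v ∈ X, a • v ∈ T₀) :
    ModuleCat.of R X ∈ C := by
  classical
  haveI : Module.Finite R W := hC.2.2 W hW
  haveI : Module.Finite R B := hC.2.2 B hB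
  haveI : IsNoetherian R W := inferInstance
  revert hT₀X hT₀ htor₀
  refine IsNoetherian.induction (P := fun T : Submodule R W =>
    T ≤ X → ModuleCat.of R T ∈ C → (∀ v ∈ X, a • v ∈ T) → ModuleCat.of R X ∈ C) ?_ T₀
  intro T ih hTX hT htor
  by_cases htop : Submodule.comap X.subtype T = ⊤
  · have hXT : X ≤ T := Submodule.comap_subtype_eq_top.mp htop
    have heq : T = X := le_antisymm hTX hXT
    exact hC.1 _ _ (LinearEquiv.ofEq T X heq) hT
  · let T' : Submodule R ↥X := Submodule.comap X.subtype T
    have hT'lt : T' < ⊤ := lt_of_le_of_ne le_top htop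
    haveI hQnt : Nontrivial (↥X ⧸ T') := Submodule.Quotient.nontrivial_iff.mpr hT'lt.ne
    haveI : Module.Finite R ↥X := Module.Finite.iff_fg.mpr (IsNoetherian.noetherian X)
    have hQfl : IsFiniteLength R (↥X ⧸ T') := by
      refine fl_of_torsion hdim _ ?_
      intro q
      obtain ⟨v, rfl⟩ := T'.mkQ_surjective q
      refine ⟨a, ha, ?_⟩
      rw [← map_smul, Submodule.mkQ_apply, Submodule.Quotient.mk_eq_zero]
      exact htor (v : W) v.2
    haveI hQart : IsArtinian R (↥X ⧸ T') :=
      (isFiniteLength_iff_isNoetherian_isArtinian.mp hQfl).2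
    haveI : IsAtomic (Submodule R (↥X ⧸ T')) :=
      isAtomic_of_orderBot_wellFounded_lt wellFounded_lt
    obtain ⟨S, hS⟩ : ∃ S : Submodule R (↥X ⧸ T'), IsAtom S := IsAtomic.exists_atom _
    haveI hSsimp : IsSimpleModule R ↥S := isSimpleModule_iff_isAtom.mpr hS
    -- T'' : preimage of S in X, Tw : its image in W
    let T'' : Submodule R ↥X := Submodule.comap T'.mkQ S
    let Tw : Submodule R W := Submodule.map X.subtype T''
    have hT'T'' : T' ≤ T'' := by
      intro x hx
      show T'.mkQ x ∈ S
      rw [Submodule.mkQ_apply, (Submodule.Quotient.mk_eq_zero _).mpr hx]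
      exact S.zero_mem
    have hTTw : T ≤ Tw := by
      intro t ht
      exact ⟨⟨t, hTX ht⟩, hT'T'' ht, rfl⟩
    have hTwX : Tw ≤ X := Submodule.map_subtype_le X T''
    have hTltTw : T < Tw := by
      refine lt_of_le_of_ne hTTw ?_
      intro heq
      obtain ⟨q, hqS, hq0⟩ := Submodule.exists_mem_ne_zero_of_ne_bot hS.1
      obtain ⟨x, rfl⟩ := T'.mkQ_surjective q
      have hxT'' : x ∈ T'' := hqS
      have hxTw : (x : W) ∈ Tw := ⟨x, hxT'', rfl⟩
      rw [← heq] at hxTw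
      have : x ∈ T' := hxTw
      apply hq0
      rw [Submodule.mkQ_apply, Submodule.Quotient.mk_eq_zero]
      exact this
    have htorw : ∀ v ∈ X, a • v ∈ Tw := fun v hv => hTTw (htor v hv)
    -- identify `Tw ⧸ T` with the simple module `S`
    let e1 : ↥T'' ≃ₗ[R] ↥Tw := Submodule.equivMapOfInjective X.subtype X.injective_subtype T''
    have hχmem : ∀ y : ↥T'', T'.mkQ (y : ↥X) ∈ S := fun y => y.2
    let χ : ↥T'' →ₗ[R] ↥S := LinearMap.codRestrict S (T'.mkQ.comp T''.subtype) hχmem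
    have hχsurj : Function.Surjective χ := by
      rintro ⟨q, hq⟩
      obtain ⟨x, rfl⟩ := T'.mkQ_surjective q
      exact ⟨⟨x, hq⟩, rfl⟩
    have hker : LinearMap.ker χ = Submodule.comap T''.subtype T' := by
      ext y
      simp only [LinearMap.mem_ker, Submodule.mem_comap]
      constructor
      · intro h
        have h2 : T'.mkQ (y : ↥X) = 0 := congrArg Subtype.val h
        rwa [Submodule.mkQ_apply, Submodule.Quotient.mk_eq_zero] at h2
      · intro h
        refine Subtype.ext ?_
        show T'.mkQ (y : ↥X) = 0
        rwa [Submodule.mkQ_apply, Submodule.Quotient.mk_eq_zero]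
    let e2 : (↥T'' ⧸ LinearMap.ker χ) ≃ₗ[R] ↥S := χ.quotKerEquivOfSurjective hχsurj
    have hmap : Submodule.map (e1 : ↥T'' →ₗ[R] ↥Tw) (Submodule.comap T''.subtype T')
        = Submodule.comap Tw.subtype T := by
      ext x
      simp only [Submodule.mem_map, Submodule.mem_comap]
      constructor
      · rintro ⟨y, hyT', rfl⟩
        exact hyT'
      · intro hxT
        obtain ⟨y, hyT'', hyx⟩ := x.2
        refine ⟨⟨y, hyT''⟩, ?_, ?_⟩
        · show X.subtype y ∈ T
          rw [hyx]
          exact hxT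
        · exact Subtype.ext hyx
    let e3 : (↥T'' ⧸ Submodule.comap T''.subtype T') ≃ₗ[R] (↥Tw ⧸ Submodule.comap Tw.subtype T) :=
      Submodule.Quotient.equiv _ _ e1 hmap
    haveI hsimp2 : IsSimpleModule R (↥Tw ⧸ Submodule.comap Tw.subtype T) :=
      IsSimpleModule.congr (e3.symm.trans ((Submodule.quotEquivOfEq _ _ hker.symm).trans e2))
    haveI := hBnt
    obtain ⟨φ, hφ⟩ := exists_surj_to_simple (R := R) (↥B) (↥Tw ⧸ Submodule.comap Tw.subtype T)
    have hTw_mem : ModuleCat.of R ↥Tw ∈ C := catL1 hC himg hext hW hB hTTw hT φ hφ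
    exact ih Tw hTltTw hTwX hTw_mem htorw

end Climb

section MainLemmas

variable {R : Type u} [CommRing R] [IsNoetherianRing R] [IsLocalRing R] [IsDomain R]
variable {C : Set (ModuleCat.{u} R)}

lemma fl_of_simple (Q : Type u) [AddCommGroup Q] [Module R Q] [IsSimpleModule R Q] :
    IsFiniteLength R Q := by
  have h0 : IsSimpleModule R (Q ⧸ (⊥ : Submodule R Q)) :=
    IsSimpleModule.congr (Submodule.quotEquivOfEqBot _ rfl)
  exact .of_simple_quotient (N := ⊥) .of_subsingleton

/-- If `C` contains a module with a nonzero torsion element, it contains a simple module. -/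
lemma catSimpleMem (hdim : ringKrullDim R = 1) (hC : IsModSubcat R C) (himg : ImagesClosed R C)
    {M₀ : ModuleCat.{u} R} (hM₀ : M₀ ∈ C) {x₀ : M₀} (hx₀ : x₀ ≠ 0)
    {r₀ : R} (hr₀ : r₀ ≠ 0) (hrx : r₀ • x₀ = 0) :
    ∃ S₀ : ModuleCat.{u} R, S₀ ∈ C ∧ IsSimpleModule R S₀ := by
  haveI : Module.Finite R M₀ := hC.2.2 M₀ hM₀
  -- find a "socle" element y
  have key : ∀ (k : ℕ) (x : M₀), x ≠ 0 → (maximalIdeal R) ^ k ≤ Ideal.torsionOf R M₀ x →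
      ∃ y : M₀, y ≠ 0 ∧ maximalIdeal R ≤ Ideal.torsionOf R M₀ y := by
    intro k
    induction k with
    | zero =>
      intro x hx hle
      rw [pow_zero, Ideal.one_eq_top, top_le_iff, Ideal.torsionOf_eq_top_iff] at hle
      exact absurd hle hx
    | succ k ih =>
      intro x hx hle
      by_cases hm : maximalIdeal R ≤ Ideal.torsionOf R M₀ x
      · exact ⟨x, hx, hm⟩
      · rw [SetLike.not_le_iff_exists] at hm
        obtain ⟨r, hrm, hrt⟩ := hm
        have hrx0 : r • x ≠ 0 := by
          rwa [Ne, ← Ideal.mem_torsionOf_iff]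
        refine ih (r • x) hrx0 ?_
        intro s hs
        rw [Ideal.mem_torsionOf_iff, smul_smul]
        have : s * r ∈ maximalIdeal R ^ (k + 1) := by
          rw [pow_succ]
          exact Ideal.mul_mem_mul hs hrm
        have := hle this
        rwa [Ideal.mem_torsionOf_iff] at this
  have htne : Ideal.torsionOf R M₀ x₀ ≠ ⊥ := by
    intro hb
    have : r₀ ∈ Ideal.torsionOf R M₀ x₀ := (Ideal.mem_torsionOf_iff _ _).mpr hrx
    rw [hb] at this
    exact hr₀ this
  obtain ⟨k, hk⟩ := pow_max_le hdim htne
  obtain ⟨y, hy0, hym⟩ := key k x₀ hx₀ hk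
  have hyeq : Ideal.torsionOf R M₀ y = maximalIdeal R := by
    refine le_antisymm (le_maximalIdeal ?_) hym
    rw [Ne, Ideal.torsionOf_eq_top_iff]
    exact hy0
  haveI hsimpq : IsSimpleModule R (R ⧸ Ideal.torsionOf R M₀ y) := by
    rw [hyeq, isSimpleModule_iff_isCoatom]
    exact (Ideal.isMaximal_def).mp (maximalIdeal.isMaximal R)
  haveI hsimpspan : IsSimpleModule R ↥(R ∙ y) :=
    IsSimpleModule.congr (Ideal.quotTorsionOfEquivSpanSingleton R M₀ y).symm
  haveI : Nontrivial M₀ := nontrivial_of_ne y 0 hy0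
  obtain ⟨φ, hφ⟩ := exists_surj_to_simple (R := R) (↥M₀) (↥(R ∙ y))
  let f : (M₀ : Type u) →ₗ[R] (M₀ : Type u) := (R ∙ y).subtype.comp φ
  have hrange : LinearMap.range f = R ∙ y := by
    rw [LinearMap.range_comp, LinearMap.range_eq_top.mpr hφ, Submodule.map_top,
      Submodule.range_subtype]
  have hmem := himg M₀ hM₀ M₀ hM₀ f
  refine ⟨ModuleCat.of R ↥(R ∙ y), ?_, hsimpspan⟩
  exact hC.1 _ _ (LinearEquiv.ofEq _ _ hrange) hmem

/-- If `C` contains a simple module, it contains all finite length modules. -/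
lemma catFL (hC : IsModSubcat R C) (hext : ExtClosed R C)
    (S₀ : ModuleCat.{u} R) (hS₀ : S₀ ∈ C) (hS₀s : IsSimpleModule R S₀) :
    ∀ (N : Type u) [AddCommGroup N] [Module R N], IsFiniteLength R N →
      ModuleCat.of R N ∈ C := by
  intro N _ _ h
  induction h with
  | of_subsingleton => exact hC.2.1 _ ‹_›
  | @of_simple_quotient M _ _ Nsub _ hfin ih =>
    have hflM : IsFiniteLength R M := fl_ext Nsub hfin (fl_of_simple _)
    haveI : IsNoetherian R M := (isFiniteLength_iff_isNoetherian_isArtinian.mp hflM).1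
    haveI : Module.Finite R M := Module.finite_def.mpr (IsNoetherian.noetherian ⊤)
    obtain ⟨e⟩ := simple_equiv (R := R) (↥S₀) (M ⧸ Nsub)
    have hquot : ModuleCat.of R (M ⧸ Nsub) ∈ C := hC.1 _ _ e hS₀
    exact hext (ModuleCat.of R ↥Nsub) (ModuleCat.of R M) (ModuleCat.of R (M ⧸ Nsub))
      ‹Module.Finite R M› Nsub.subtype Nsub.mkQ (Submodule.injective_subtype Nsub)
      (Submodule.mkQ_surjective Nsub)
      (by rw [Submodule.range_subtype, Submodule.ker_mkQ]) ih hquot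

/-- If `C` contains a module with an element with zero annihilator, then `R ∈ C`. -/
lemma catR_mem (hdim : ringKrullDim R = 1) (hC : IsModSubcat R C) (himg : ImagesClosed R C)
    (hext : ExtClosed R C) {M₀ : ModuleCat.{u} R} (hM₀ : M₀ ∈ C) {x₀ : M₀}
    (hx₀ : ∀ r : R, r • x₀ = 0 → r = 0) : ModuleCat.of R R ∈ C := by
  have hx0ne : x₀ ≠ 0 := by
    intro h
    exact one_ne_zero (hx₀ 1 (by rw [h, smul_zero]))
  haveI : Module.Finite R M₀ := hC.2.2 M₀ hM₀
  set T : Submodule R M₀ := Submodule.torsion R M₀ with hTdef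
  have hx₀T : x₀ ∉ T := by
    intro hmem
    obtain ⟨⟨c, hc⟩, hcx⟩ := hmem
    exact (mem_nonZeroDivisors_iff_ne_zero.mp hc) (hx₀ c hcx)
  haveI : NoZeroSMulDivisors R (↥M₀ ⧸ T) :=
    ⟨fun {r m} h => (Module.isTorsionFree_iff_smul_eq_zero.mp inferInstance) r m h⟩
  obtain ⟨n, eF, heF⟩ := embeds_free (R := R) (↥M₀ ⧸ T)
  have hmkne : T.mkQ x₀ ≠ 0 := by
    rw [Submodule.mkQ_apply, Ne, Submodule.Quotient.mk_eq_zero]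
    exact hx₀T
  have heFne : eF (T.mkQ x₀) ≠ 0 := fun h => hmkne (by
    apply heF
    rw [h, map_zero])
  obtain ⟨i, hi⟩ : ∃ i, eF (T.mkQ x₀) i ≠ 0 := by
    by_contra h
    push_neg at h
    exact heFne (funext h)
  let lam : (M₀ : Type u) →ₗ[R] R := (LinearMap.proj i).comp (eF.comp T.mkQ)
  set a : R := lam x₀ with ha_def
  have ha : a ≠ 0 := hi
  let f : (M₀ : Type u) →ₗ[R] (M₀ : Type u) :=
    (LinearMap.toSpanSingleton R M₀ x₀).comp lam
  have hfapp : ∀ z : M₀, f z = lam z • x₀ := fun z => rfl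
  have hA : ModuleCat.of R ↥(LinearMap.range f) ∈ C := himg M₀ hM₀ M₀ hM₀ f
  have hAX : LinearMap.range f ≤ R ∙ x₀ := by
    rintro v ⟨z, rfl⟩
    rw [hfapp]
    exact Submodule.smul_mem _ _ (Submodule.mem_span_singleton_self x₀)
  have htor : ∀ v ∈ R ∙ x₀, a • v ∈ LinearMap.range f := by
    intro v hv
    obtain ⟨c, rfl⟩ := Submodule.mem_span_singleton.mp hv
    refine ⟨c • x₀, ?_⟩
    rw [hfapp, map_smul, smul_eq_mul, ha_def, mul_comm, smul_smul]
  haveI : Nontrivial M₀ := nontrivial_of_ne x₀ 0 hx0ne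
  have hspan : ModuleCat.of R ↥(R ∙ x₀) ∈ C :=
    catClimb hdim hC himg hext hM₀ hM₀ ‹Nontrivial M₀› ha (R ∙ x₀) (LinearMap.range f)
      hAX hA htor
  have htors : Ideal.torsionOf R M₀ x₀ = ⊥ := by
    ext r
    simp only [Ideal.mem_torsionOf_iff, Submodule.mem_bot]
    exact ⟨hx₀ r, fun h => by rw [h, zero_smul]⟩
  let e : (R : Type u) ≃ₗ[R] ↥(R ∙ x₀) :=
    ((Submodule.quotEquivOfEqBot (⊥ : Ideal R) rfl).symm.trans
      (Submodule.quotEquivOfEq ⊥ (Ideal.torsionOf R M₀ x₀) htors.symm)).trans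
      (Ideal.quotTorsionOfEquivSpanSingleton R M₀ x₀)
  exact hC.1 _ _ e.symm hspan

end MainLemmas

section PiTF

variable {R : Type u} [CommRing R] [IsNoetherianRing R] [IsLocalRing R] [IsDomain R]
variable {C : Set (ModuleCat.{u} R)}

lemma catPi (hC : IsModSubcat R C) (hext : ExtClosed R C)
    (hR : ModuleCat.of R R ∈ C) : ∀ n : ℕ, ModuleCat.of R (Fin n → R) ∈ C := by
  intro n
  induction n with
  | zero =>
    refine hC.2.1 _ ?_
    exact ⟨fun a b => funext fun i => absurd i.2 (by omega)⟩
  | succ n ih =>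
    let f : (R : Type u) →ₗ[R] (Fin (n + 1) → R) := LinearMap.single R (fun _ => R) 0
    let g : (Fin (n + 1) → R) →ₗ[R] (Fin n → R) := LinearMap.funLeft R R Fin.succ
    have hfinj : Function.Injective f := by
      intro r s h
      have := congrFun h 0
      simpa [f] using this
    have hgsurj : Function.Surjective g := by
      intro w
      refine ⟨Fin.cons 0 w, ?_⟩
      funext j
      show (Fin.cons 0 w : Fin (n+1) → R) j.succ = w j
      simp
    have hrk : LinearMap.range f = LinearMap.ker g := by
      ext v
      simp only [LinearMap.mem_range, LinearMap.mem_ker]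
      constructor
      · rintro ⟨r, rfl⟩
        funext j
        show (Pi.single (M := fun _ : Fin (n+1) => R) 0 r) j.succ = 0
        exact Pi.single_eq_of_ne (Fin.succ_ne_zero j) r
      · intro hv
        refine ⟨v 0, ?_⟩
        funext j
        induction j using Fin.cases with
        | zero => exact Pi.single_eq_same (M := fun _ : Fin (n+1) => R) 0 (v 0)
        | succ i =>
          have hvi : v i.succ = 0 := congrFun hv i
          calc (f (v 0)) i.succ = 0 := Pi.single_eq_of_ne (Fin.succ_ne_zero i) (v 0)
            _ = v i.succ := hvi.symm
    exact hext (ModuleCat.of R R) (ModuleCat.of R (Fin (n+1) → R)) (ModuleCat.of R (Fin n → R))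
      (inferInstance : Module.Finite R (Fin (n+1) → R)) f g hfinj hgsurj hrk hR ih

lemma catTF (hC : IsModSubcat R C) (himg : ImagesClosed R C) (hext : ExtClosed R C)
    (hR : ModuleCat.of R R ∈ C) (N : Type u) [AddCommGroup N] [Module R N]
    [Module.Finite R N] [NoZeroSMulDivisors R N] : ModuleCat.of R N ∈ C := by
  obtain ⟨n, e, he⟩ := embeds_free (R := R) N
  obtain ⟨k, p, hp⟩ := Module.Finite.exists_fin' R N
  let f : (Fin k → R) →ₗ[R] (Fin n → R) := e.comp p
  have hrange : LinearMap.range f = LinearMap.range e := by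
    rw [LinearMap.range_comp, LinearMap.range_eq_top.mpr hp, Submodule.map_top]
  have hmem := himg (ModuleCat.of R (Fin k → R)) (catPi hC hext hR k)
    (ModuleCat.of R (Fin n → R)) (catPi hC hext hR n) f
  have : ModuleCat.of R ↥(LinearMap.range e) ∈ C :=
    hC.1 _ _ (LinearEquiv.ofEq _ _ hrange) hmem
  exact hC.1 _ _ (LinearEquiv.ofInjective e he).symm this

end PiTF

/-!
STATEMENT 15: Let `R` be a commutative noetherian local domain of Krull dimension 1.
A subcategory `𝒞` of `mod R` is IE-closed (equivalently, a torsion-free class) iff it is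
one of: the zero subcategory, the finite length modules, the torsion-free finitely
generated modules, or all of `mod R`.
-/

theorem ie_closed_classification_dim_one_local_domain
    (R : Type u) [CommRing R] [IsNoetherianRing R] [IsLocalRing R] [IsDomain R]
    (hdim : ringKrullDim R = 1)
    (C : Set (ModuleCat.{u} R)) (hC : IsModSubcat R C) :
    (ImagesClosed R C ∧ ExtClosed R C) ↔
      (C = {M : ModuleCat.{u} R | Subsingleton M} ∨
       C = {M : ModuleCat.{u} R | IsFiniteLength R M} ∨
       C = {M : ModuleCat.{u} R | Module.Finite R M ∧ NoZeroSMulDivisors R M} ∨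
       C = {M : ModuleCat.{u} R | Module.Finite R M}) := by
  constructor
  · rintro ⟨himg, hext⟩
    by_cases hT : ∃ M ∈ C, ∃ x : M, x ≠ 0 ∧ ∃ r : R, r ≠ 0 ∧ r • x = 0
    · by_cases hF : ∃ M ∈ C, ∃ x : M, ∀ r : R, r • x = 0 → r = 0
      · -- C = all of mod R
        right; right; right
        ext M
        simp only [Set.mem_setOf_eq]
        constructor
        · exact fun hM => hC.2.2 M hM
        · intro hfin
          obtain ⟨M₁, hM₁, x, hx, r, hr, hrx⟩ := hT
          obtain ⟨S₀, hS₀, hS₀s⟩ := catSimpleMem hdim hC himg hM₁ hx hr hrx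
          obtain ⟨M₂, hM₂, y, hy⟩ := hF
          have hR : ModuleCat.of R R ∈ C := catR_mem hdim hC himg hext hM₂ hy
          haveI : Module.Finite R M := hfin
          set T : Submodule R M := Submodule.torsion R M with hTdef
          haveI : Module.Finite R ↥T := Module.Finite.iff_fg.mpr (IsNoetherian.noetherian T)
          have hTfl : IsFiniteLength R ↥T := by
            refine fl_of_torsion hdim ↥T ?_
            rintro ⟨z, hz⟩
            obtain ⟨⟨c, hc⟩, hcz⟩ := hz
            refine ⟨c, mem_nonZeroDivisors_iff_ne_zero.mp hc, ?_⟩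
            exact Subtype.ext hcz
          have hTC : ModuleCat.of R ↥T ∈ C := catFL hC hext S₀ hS₀ hS₀s ↥T hTfl
          haveI : NoZeroSMulDivisors R (M ⧸ T) :=
            ⟨fun {r m} h => (Module.isTorsionFree_iff_smul_eq_zero.mp inferInstance) r m h⟩
          have hQC : ModuleCat.of R (M ⧸ T) ∈ C := catTF hC himg hext hR (M ⧸ T)
          exact hext (ModuleCat.of R ↥T) M (ModuleCat.of R (M ⧸ T)) hfin
            T.subtype T.mkQ (Submodule.injective_subtype T) (Submodule.mkQ_surjective T)
            (by rw [Submodule.range_subtype, Submodule.ker_mkQ]) hTC hQC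
      · -- C = finite length modules
        right; left
        ext M
        simp only [Set.mem_setOf_eq]
        constructor
        · intro hM
          haveI : Module.Finite R M := hC.2.2 M hM
          refine fl_of_torsion hdim M ?_
          intro x
          by_cases hx : x = 0
          · exact ⟨1, one_ne_zero, by rw [hx, smul_zero]⟩
          · by_contra hcon
            push_neg at hcon
            refine hF ⟨M, hM, x, ?_⟩
            intro r hr
            by_contra hrne
            exact hcon r hrne hr
        · intro hfl
          obtain ⟨M₁, hM₁, x, hx, r, hr, hrx⟩ := hT
          obtain ⟨S₀, hS₀, hS₀s⟩ := catSimpleMem hdim hC himg hM₁ hx hr hrx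
          have := catFL hC hext S₀ hS₀ hS₀s M hfl
          exact hC.1 _ _ (LinearEquiv.refl R M) this
    · by_cases hF : ∃ M ∈ C, ∃ x : M, ∀ r : R, r • x = 0 → r = 0
      · -- C = torsion-free f.g. modules
        right; right; left
        ext M
        simp only [Set.mem_setOf_eq]
        constructor
        · intro hM
          refine ⟨hC.2.2 M hM, ⟨fun {r x} hrx => ?_⟩⟩
          by_contra hcon
          push_neg at hcon
          exact hT ⟨M, hM, x, hcon.2, r, hcon.1, hrx⟩
        · rintro ⟨hfin, hnz⟩
          obtain ⟨M₂, hM₂, y, hy⟩ := hF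
          have hR := catR_mem hdim hC himg hext hM₂ hy
          haveI := hfin; haveI := hnz
          have := catTF hC himg hext hR M
          exact hC.1 _ _ (LinearEquiv.refl R M) this
      · -- C = zero
        left
        ext M
        simp only [Set.mem_setOf_eq]
        constructor
        · intro hM
          refine subsingleton_of_forall_eq 0 fun x => ?_
          by_contra hx
          by_cases hxr : ∃ r : R, r ≠ 0 ∧ r • x = 0
          · obtain ⟨r, hr, hrx⟩ := hxr
            exact hT ⟨M, hM, x, hx, r, hr, hrx⟩
          · push_neg at hxr
            refine hF ⟨M, hM, x, ?_⟩
            intro r hr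
            by_contra hrne
            exact (hxr r hrne) hr
        · intro hsub
          exact hC.2.1 M hsub
  · rintro (rfl | rfl | rfl | rfl)
    · constructor
      · intro M₁ h₁ M₂ h₂ f
        simp only [Set.mem_setOf_eq] at h₁ h₂ ⊢
        haveI : Subsingleton M₂ := h₂
        show Subsingleton ↥(LinearMap.range f)
        infer_instance
      · intro L M N hfin f g hf hg hrk hL hN
        simp only [Set.mem_setOf_eq] at hL hN ⊢
        haveI := hL; haveI := hN
        refine subsingleton_of_forall_eq 0 fun x => ?_
        have hxker : x ∈ LinearMap.ker g := Subsingleton.elim _ _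
        rw [← hrk] at hxker
        obtain ⟨l, rfl⟩ := hxker
        rw [Subsingleton.elim l 0, map_zero]
    · constructor
      · intro M₁ h₁ M₂ h₂ f
        simp only [Set.mem_setOf_eq] at h₁ h₂ ⊢
        obtain ⟨hn, ha⟩ := isFiniteLength_iff_isNoetherian_isArtinian.mp h₂
        show IsFiniteLength R ↥(LinearMap.range f)
        exact isFiniteLength_iff_isNoetherian_isArtinian.mpr ⟨inferInstance, inferInstance⟩
      · intro L M N hfin f g hf hg hrk hL hN
        simp only [Set.mem_setOf_eq] at hL hN ⊢
        obtain ⟨hn1, ha1⟩ := isFiniteLength_iff_isNoetherian_isArtinian.mp hL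
        obtain ⟨hn2, ha2⟩ := isFiniteLength_iff_isNoetherian_isArtinian.mp hN
        exact isFiniteLength_iff_isNoetherian_isArtinian.mpr
          ⟨isNoetherian_of_range_eq_ker f g hrk, isArtinian_of_range_eq_ker f g hrk⟩
    · constructor
      · intro M₁ h₁ M₂ h₂ f
        simp only [Set.mem_setOf_eq] at h₁ h₂ ⊢
        haveI := h₁.1; haveI := h₂.1; haveI := h₂.2
        show Module.Finite R ↥(LinearMap.range f) ∧ NoZeroSMulDivisors R ↥(LinearMap.range f)
        exact ⟨inferInstance,
          ⟨fun {r m} h => (eq_zero_or_eq_zero_of_smul_eq_zero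
            (congrArg Subtype.val h : r • (m : M₂) = 0)).imp id Subtype.ext⟩⟩
      · intro L M N hfin f g hf hg hrk hL hN
        simp only [Set.mem_setOf_eq] at hL hN ⊢
        haveI := hL.1; haveI := hL.2; haveI := hN.1; haveI := hN.2
        refine ⟨hfin, ⟨fun {r x} hrx => ?_⟩⟩
        by_cases hr : r = 0
        · exact Or.inl hr
        · right
          have hgx : g x = 0 := by
            have : r • g x = 0 := by rw [← map_smul, hrx, map_zero]
            rcases eq_zero_or_eq_zero_of_smul_eq_zero this with h | h
            · exact absurd h hr
            · exact h
          have hxker : x ∈ LinearMap.ker g := hgx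
          rw [← hrk] at hxker
          obtain ⟨l, rfl⟩ := hxker
          have : f (r • l) = 0 := by rw [map_smul, hrx]
          have hl : r • l = 0 := by
            apply hf
            rw [this, map_zero]
          rcases eq_zero_or_eq_zero_of_smul_eq_zero hl with h | h
          · exact absurd h hr
          · rw [h, map_zero]
    · constructor
      · intro M₁ h₁ M₂ h₂ f
        simp only [Set.mem_setOf_eq] at h₁ h₂ ⊢
        haveI := h₁
        show Module.Finite R ↥(LinearMap.range f)
        infer_instance
      · intro L M N hfin f g hf hg hrk hL hN
        simp only [Set.mem_setOf_eq]
        exact hfin
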